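/- The set of n×n permutation matrices is exactly the set of extreme points of the Birkhoff polytope B_n of doubly stochastic matrices. -/

import Mathlib

/-- The set of n×n doubly stochastic matrices (Birkhoff polytope). -/
def doublyStochasticSet (n : ℕ) : Set (Matrix (Fin n) (Fin n) ℝ) :=
  {B | (∀ i j, 0 ≤ B i j) ∧ (∀ i, ∑ j, B i j = 1) ∧ (∀ j, ∑ i, B i j = 1)}

lemma doublyStochasticSet_eq (n : ℕ) :
    doublyStochasticSet n = (doublyStochastic ℝ (Fin n) : Set (Matrix (Fin n) (Fin n) ℝ)) := by
  ext M
  simp [doublyStochasticSet, mem_doublyStochastic_iff_sum, Set.mem_setOf_eq, and_assoc]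

lemma permSet_eq (n : ℕ) :
    {P : Matrix (Fin n) (Fin n) ℝ | ∃ σ : Equiv.Perm (Fin n),
        P = Matrix.of fun i j => if σ j = i then (1:ℝ) else 0} =
      {M | ∃ σ : Equiv.Perm (Fin n), σ.permMatrix ℝ = M} := by
  ext P
  constructor
  · rintro ⟨σ, rfl⟩
    refine ⟨σ⁻¹, ?_⟩
    ext i j
    simp only [Equiv.Perm.permMatrix, PEquiv.toMatrix, Equiv.toPEquiv, Matrix.of_apply,
      Option.mem_def, Option.some.injEq, Equiv.coe_fn_mk]
    by_cases hc : σ⁻¹ i = j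
    · subst hc; simp
    · have h2 : σ j ≠ i := fun e => hc (by simp [← e])
      simp [hc, h2]; exact hc
  · rintro ⟨σ, rfl⟩
    refine ⟨σ⁻¹, ?_⟩
    ext i j
    simp only [Equiv.Perm.permMatrix, PEquiv.toMatrix, Equiv.toPEquiv, Matrix.of_apply,
      Option.mem_def, Option.some.injEq, Equiv.coe_fn_mk]
    by_cases hc : σ i = j
    · subst hc; simp
    · have h2 : σ⁻¹ j ≠ i := fun e => hc (by simp [← e])
      simp [hc, h2]; exact h2

/-- the extreme points of the Birkhoff polytope are exactly the
permutation matrices. -/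
theorem extremePoints_birkhoff_eq_permMatrices (n : ℕ) :
    Set.extremePoints ℝ (doublyStochasticSet n) =
      {P | ∃ σ : Equiv.Perm (Fin n),
        P = Matrix.of fun i j => if σ j = i then (1:ℝ) else 0} := by
  rw [permSet_eq, doublyStochasticSet_eq]
  apply Set.Subset.antisymm
  · -- extreme points ⊆ permutation matrices
    intro M hM
    rw [doublyStochastic_eq_convexHull_permMatrix] at hM
    exact extremePoints_convexHull_subset hM
  · -- permutation matrices are extreme points
    rintro M ⟨σ, rfl⟩
    rw [mem_extremePoints]
    refine ⟨permMatrix_mem_doublyStochastic, ?_⟩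
    intro x hx y hy hseg
    rw [openSegment_eq_image₂] at hseg
    obtain ⟨⟨a, b⟩, ⟨ha, hb, hab⟩, hsum⟩ := hseg
    -- key: any doubly stochastic z with z vanishing wherever permMatrix vanishes equals it
    have key : ∀ z ∈ doublyStochastic ℝ (Fin n),
        (∀ i j, σ.permMatrix ℝ i j = 0 → z i j = 0) → z = σ.permMatrix ℝ := by
      intro z hz h0
      ext i j
      rcases eq_or_ne (σ i) j with hij | hij
      · have hrow := sum_row_of_mem_doublyStochastic hz i
        have : ∀ k ∈ Finset.univ, k ≠ j → z i k = 0 := by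
          intro k _ hk
          apply h0
          simp [Equiv.Perm.permMatrix, PEquiv.toMatrix, Equiv.toPEquiv, hij, hk.symm]
        rw [Finset.sum_eq_single_of_mem j (Finset.mem_univ j) this] at hrow
        simp [hrow, Equiv.Perm.permMatrix, PEquiv.toMatrix, Equiv.toPEquiv, hij]
      · rw [h0 i j (by simp [Equiv.Perm.permMatrix, PEquiv.toMatrix, Equiv.toPEquiv, hij])]
        simp [Equiv.Perm.permMatrix, PEquiv.toMatrix, Equiv.toPEquiv, hij]
    have hx0 : ∀ i j, σ.permMatrix ℝ i j = 0 → x i j = 0 := by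
      intro i j h
      have := congrFun (congrFun hsum i) j
      simp only [Matrix.add_apply, Matrix.smul_apply, smul_eq_mul] at this
      rw [h] at this
      have hxn := nonneg_of_mem_doublyStochastic hx (i := i) (j := j)
      have hyn := nonneg_of_mem_doublyStochastic hy (i := i) (j := j)
      nlinarith
    have hy0 : ∀ i j, σ.permMatrix ℝ i j = 0 → y i j = 0 := by
      intro i j h
      have := congrFun (congrFun hsum i) j
      simp only [Matrix.add_apply, Matrix.smul_apply, smul_eq_mul] at this
      rw [h] at this
      have hxn := nonneg_of_mem_doublyStochastic hx (i := i) (j := j)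
      have hyn := nonneg_of_mem_doublyStochastic hy (i := i) (j := j)
      nlinarith
    exact ⟨key x hx hx0, key y hy hy0⟩
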